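/- There exists a constant C₀ > 0 such that for every integer k ≥ 1 and every real y, |e^{−y²/2} H_k(y)| ≤ C₀ √(k!) · k^{−1/12} · e^{−y²/4}, where H_k is the k-th probabilists' Hermite polynomial. -/

import Mathlib

open Real Filter

noncomputable section

/-- the standard normal density φ(x) = (2π)^{-1/2} exp(−x²/2) -/
def stdNormalPDF (x : ℝ) : ℝ := (Real.sqrt (2 * π))⁻¹ * Real.exp (-x ^ 2 / 2)

/-- the k-th probabilists' Hermite polynomial, evaluated at a real number;
`Polynomial.hermite` satisfies `H_k(x) = (−1)^k φ(x)⁻¹ (d^k/dx^k) φ(x)`. -/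
def He (k : ℕ) (y : ℝ) : ℝ := Polynomial.aeval y (Polynomial.hermite k)

namespace S12
open Polynomial MeasureTheory intervalIntegral Nat

lemma hermite_deriv (n : ℕ) :
    derivative (hermite (n + 1)) = ((n : ℤ[X]) + 1) * hermite n := by
  induction n with
  | zero => simp [hermite_one, hermite_zero]
  | succ n ih =>
    rw [hermite_succ (n+1)]
    rw [derivative_sub, derivative_mul, derivative_X, one_mul, ih]
    rw [derivative_mul, hermite_succ n]
    simp only [derivative_add, derivative_natCast, derivative_one, add_zero, zero_add, zero_mul]
    push_cast
    ring

lemma hermite_deriv2 (n : ℕ) :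
    derivative (derivative (hermite (n + 1))) =
      X * derivative (hermite (n + 1)) - ((n : ℤ[X]) + 1) * hermite (n + 1) := by
  have hds : derivative (hermite n) = X * hermite n - hermite (n + 1) := by
    rw [hermite_succ n]; ring
  rw [hermite_deriv n, derivative_mul, hds]
  simp only [derivative_add, derivative_natCast, derivative_one, add_zero, zero_mul, zero_add]
  ring

def L (k : ℕ) : ℝ := k + 1/2
def ss (k : ℕ) : ℝ := (L k) ^ ((1:ℝ)/6)
def pp (k : ℕ) (x : ℝ) : ℝ := Polynomial.aeval x (hermite k)
def pp1 (k : ℕ) (x : ℝ) : ℝ := Polynomial.aeval x (derivative (hermite k))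
def w (k : ℕ) (x : ℝ) : ℝ := Real.exp (-x^2/4) * pp k x
def w1 (k : ℕ) (x : ℝ) : ℝ := Real.exp (-x^2/4) * (pp1 k x - x/2 * pp k x)
def qq (k : ℕ) (x : ℝ) : ℝ := L k - x^2/4
def EE (k : ℕ) (x : ℝ) : ℝ := (w1 k x)^2 + qq k x * (w k x)^2
def HH (k : ℕ) (x : ℝ) : ℝ := w k x * w1 k x
def VV (k : ℕ) (x : ℝ) : ℝ := EE k x / Real.sqrt (qq k x)
def gg (k : ℕ) (x : ℝ) : ℝ := x / (4 * qq k x * Real.sqrt (qq k x))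
def gg' (k : ℕ) (x : ℝ) : ℝ := (4 * qq k x + 3*x^2) / (16 * (qq k x)^2 * Real.sqrt (qq k x))

lemma pp_eq (k : ℕ) (x : ℝ) : pp k x = ((hermite k).map (algebraMap ℤ ℝ)).eval x := by
  simp [pp, aeval_def, eval₂_eq_eval_map]

lemma pp1_eq (k : ℕ) (x : ℝ) :
    pp1 k x = (((hermite k).map (algebraMap ℤ ℝ)).derivative).eval x := by
  simp [pp1, aeval_def, eval₂_eq_eval_map, derivative_map]

lemma hasDerivAt_pp (k : ℕ) (x : ℝ) : HasDerivAt (pp k) (pp1 k x) x := by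
  have h := ((hermite k).map (algebraMap ℤ ℝ)).hasDerivAt x
  rw [← pp1_eq] at h
  exact h.congr_of_eventuallyEq (Filter.Eventually.of_forall fun y => (pp_eq k y))

lemma hasDerivAt_pp1 (k : ℕ) (hk : 1 ≤ k) (x : ℝ) :
    HasDerivAt (pp1 k) (x * pp1 k x - k * pp k x) x := by
  obtain ⟨n, rfl⟩ := Nat.exists_eq_add_of_le hk
  have h := (((hermite (1 + n)).map (algebraMap ℤ ℝ)).derivative).hasDerivAt x
  have e2 : ∀ y : ℝ, (((hermite (1+n)).map (algebraMap ℤ ℝ)).derivative).eval y = pp1 (1+n) y :=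
    fun y => (pp1_eq (1+n) y).symm
  have key : (((hermite (1+n)).map (algebraMap ℤ ℝ)).derivative).derivative.eval x
      = x * pp1 (1+n) x - (1+n : ℕ) * pp (1+n) x := by
    rw [derivative_map, derivative_map]
    have : (1 + n) = n + 1 := by omega
    rw [this] at *
    rw [hermite_deriv2 n]
    simp [pp1_eq, pp_eq, derivative_map]
  rw [key] at h
  exact h.congr_of_eventuallyEq (Filter.Eventually.of_forall fun y => (pp1_eq (1+n) y))


def yy (k : ℕ) : ℝ := 2 * Real.sqrt (L k - ss k ^ 2)
def zz (k : ℕ) : ℝ := yy k + 4 / ss k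
def mm (k : ℕ) (x : ℝ) : ℝ := (w k x)^2 + (w1 k x)^2 / (3 * ss k)^2

-- parity
lemma hermite_parity (n : ℕ) (x : ℝ) :
    (Polynomial.aeval (-x) (hermite n) : ℝ) = (-1)^n * Polynomial.aeval x (hermite n) ∧
    (Polynomial.aeval (-x) (derivative (hermite n)) : ℝ)
      = (-1)^(n+1) * Polynomial.aeval x (derivative (hermite n)) := by
  induction n with
  | zero => simp
  | succ n ih =>
    constructor
    · rw [hermite_succ n]
      simp only [map_sub, map_mul, aeval_X, ih.1, ih.2]
      ring
    · rw [hermite_deriv n]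
      simp only [map_mul, map_add, map_one, map_natCast, ih.1]
      ring

lemma hasDerivAt_gauss (x : ℝ) :
    HasDerivAt (fun y : ℝ => Real.exp (-y^2/4)) (-(x/2) * Real.exp (-x^2/4)) x := by
  have h1 : HasDerivAt (fun y : ℝ => -y^2/4) (-(x/2)) x := by
    have := ((hasDerivAt_pow 2 x).neg).div_const 4
    refine this.congr_deriv ?_
    norm_num; ring
  convert h1.exp using 1
  ring

lemma hasDerivAt_w (k : ℕ) (x : ℝ) : HasDerivAt (w k) (w1 k x) x := by
  have := (hasDerivAt_gauss x).mul (hasDerivAt_pp k x)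
  refine this.congr_deriv ?_
  unfold w1; ring

lemma hasDerivAt_w1 (k : ℕ) (hk : 1 ≤ k) (x : ℝ) :
    HasDerivAt (w1 k) ((x^2/4 - L k) * w k x) x := by
  have hin : HasDerivAt (fun y => pp1 k y - y/2 * pp k y)
      ((x * pp1 k x - k * pp k x) - ((1/2) * pp k x + x/2 * pp1 k x)) x := by
    exact (hasDerivAt_pp1 k hk x).sub (((hasDerivAt_id x).div_const 2).mul (hasDerivAt_pp k x))
  have := (hasDerivAt_gauss x).mul hin
  refine this.congr_deriv ?_
  unfold w L; ring

lemma hasDerivAt_qq (k : ℕ) (x : ℝ) : HasDerivAt (qq k) (-(x/2)) x := by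
  have h1 : HasDerivAt (fun y : ℝ => y^2/4) (x/2) x := by
    have := (hasDerivAt_pow 2 x).div_const 4
    refine this.congr_deriv ?_
    norm_num; ring
  exact h1.const_sub (L k)

lemma hasDerivAt_HH (k : ℕ) (hk : 1 ≤ k) (x : ℝ) :
    HasDerivAt (HH k) ((w1 k x)^2 - qq k x * (w k x)^2) x := by
  have := (hasDerivAt_w k x).mul (hasDerivAt_w1 k hk x)
  refine this.congr_deriv ?_
  unfold qq; ring

lemma hasDerivAt_EE (k : ℕ) (hk : 1 ≤ k) (x : ℝ) :
    HasDerivAt (EE k) (-(x/2) * (w k x)^2) x := by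
  have h1 := (hasDerivAt_w1 k hk x).pow 2
  have h2 := (hasDerivAt_qq k x).mul ((hasDerivAt_w k x).pow 2)
  have := h1.add h2
  refine this.congr_deriv ?_
  simp only [Pi.pow_apply]
  unfold qq; ring

lemma hasDerivAt_sqq (k : ℕ) (x : ℝ) (hq : 0 < qq k x) :
    HasDerivAt (fun y => Real.sqrt (qq k y)) (-(x/2) / (2 * Real.sqrt (qq k x))) x :=
  (hasDerivAt_qq k x).sqrt hq.ne'

lemma hasDerivAt_VV (k : ℕ) (hk : 1 ≤ k) (x : ℝ) (hq : 0 < qq k x) :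
    HasDerivAt (VV k) (gg k x * ((w1 k x)^2 - qq k x * (w k x)^2)) x := by
  have hs0 : Real.sqrt (qq k x) ≠ 0 := (Real.sqrt_pos.mpr hq).ne'
  have := (hasDerivAt_EE k hk x).div (hasDerivAt_sqq k x hq) hs0
  refine this.congr_deriv ?_
  have ht2 : Real.sqrt (qq k x) ^ 2 = qq k x := Real.sq_sqrt hq.le
  set t := Real.sqrt (qq k x) with htdef
  unfold gg EE
  rw [← htdef]
  rw [← ht2]
  field_simp
  ring

lemma hasDerivAt_gg (k : ℕ) (x : ℝ) (hq : 0 < qq k x) :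
    HasDerivAt (gg k) (gg' k x) x := by
  have hs : 0 < Real.sqrt (qq k x) := Real.sqrt_pos.mpr hq
  have hD : HasDerivAt (fun y => 4 * qq k y * Real.sqrt (qq k y))
      (4 * -(x/2) * Real.sqrt (qq k x) + 4 * qq k x * (-(x/2) / (2 * Real.sqrt (qq k x)))) x :=
    (((hasDerivAt_qq k x).const_mul 4).mul (hasDerivAt_sqq k x hq))
  have hD0 : 4 * qq k x * Real.sqrt (qq k x) ≠ 0 := by positivity
  have := (hasDerivAt_id x).div hD hD0
  refine this.congr_deriv ?_
  have ht2 : Real.sqrt (qq k x) ^ 2 = qq k x := Real.sq_sqrt hq.le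
  set t := Real.sqrt (qq k x) with htdef
  unfold gg'
  rw [← htdef]
  simp only [id]
  rw [← ht2]
  field_simp
  ring


section Facts
variable (k : ℕ) (hk : 1 ≤ k)

lemma L_pos : 0 < L k := by unfold L; positivity
include hk in
lemma L_ge : (3:ℝ)/2 ≤ L k := by
  unfold L
  have : (1:ℝ) ≤ k := by exact_mod_cast hk
  linarith
include hk in
lemma ss_ge_one : 1 ≤ ss k := Real.one_le_rpow (by linarith [L_ge k hk]) (by norm_num)
include hk in
lemma ss_pos : 0 < ss k := lt_of_lt_of_le one_pos (ss_ge_one k hk)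
lemma ss_pow6 : ss k ^ (6:ℕ) = L k := by
  rw [ss, ← Real.rpow_natCast ((L k) ^ ((1:ℝ)/6)) 6, ← Real.rpow_mul (L_pos k).le]
  norm_num
lemma ss_pow3 : ss k ^ (3:ℕ) = Real.sqrt (L k) := by
  rw [ss, ← Real.rpow_natCast ((L k) ^ ((1:ℝ)/6)) 3, ← Real.rpow_mul (L_pos k).le,
    Real.sqrt_eq_rpow]
  norm_num
include hk in
lemma ss_sq_le_L : ss k ^ 2 ≤ L k := by
  have h6 := ss_pow6 k
  have := pow_le_pow_right₀ (ss_ge_one k hk) (show (2:ℕ) ≤ 6 by norm_num)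
  linarith
include hk in
lemma yy_nonneg : 0 ≤ yy k := by unfold yy; positivity
include hk in
lemma qq_yy : qq k (yy k) = ss k ^ 2 := by
  unfold qq yy
  rw [mul_pow, Real.sq_sqrt (by linarith [ss_sq_le_L k hk])]
  ring
include hk in
lemma yy_le : yy k ≤ 2 * ss k ^ 3 := by
  rw [ss_pow3]
  unfold yy
  have h1 : Real.sqrt (L k - ss k ^2) ≤ Real.sqrt (L k) :=
    Real.sqrt_le_sqrt (by nlinarith [ss_pos k hk])
  linarith

include hk in
lemma qq_mono (x t : ℝ) (ht0 : 0 ≤ t) (htx : t ≤ x) : qq k x ≤ qq k t := by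
  unfold qq; nlinarith
include hk in
lemma qq_lb (x : ℝ) (hx : x ∈ Set.Icc 0 (yy k)) : ss k ^ 2 ≤ qq k x := by
  have := qq_mono k hk (yy k) x hx.1 hx.2
  rw [qq_yy k hk] at this; exact this
include hk in
lemma qq_pos_on (x : ℝ) (hx : x ∈ Set.Icc 0 (yy k)) : 0 < qq k x :=
  lt_of_lt_of_le (pow_pos (ss_pos k hk) 2) (qq_lb k hk x hx)

include hk in
lemma gg_le_half (x : ℝ) (hx : x ∈ Set.Icc 0 (yy k)) : gg k x ≤ 1/2 := by
  have hq := qq_lb k hk x hx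
  have hs := ss_pos k hk
  have hsq : ss k ≤ Real.sqrt (qq k x) := by
    rw [show ss k = Real.sqrt (ss k ^ 2) from (Real.sqrt_sq hs.le).symm]
    exact Real.sqrt_le_sqrt hq
  have hxle : x ≤ 2 * ss k ^ 3 := le_trans hx.2 (yy_le k hk)
  have hden : 4 * ss k ^ 3 ≤ 4 * qq k x * Real.sqrt (qq k x) := by nlinarith
  calc gg k x ≤ (2 * ss k ^3) / (4 * ss k ^ 3) := by
        apply div_le_div₀ (by positivity) hxle (by positivity) (by linarith)
    _ = 1/2 := by field_simp; ring
include hk in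
lemma gg_nonneg (x : ℝ) (hx : x ∈ Set.Icc 0 (yy k)) : 0 ≤ gg k x := by
  have hq := qq_pos_on k hk x hx
  have : 0 < Real.sqrt (qq k x) := Real.sqrt_pos.mpr hq
  unfold gg
  exact div_nonneg hx.1 (by positivity)
include hk in
lemma gg'_nonneg (x : ℝ) (hx : x ∈ Set.Icc 0 (yy k)) : 0 ≤ gg' k x := by
  have hq := qq_pos_on k hk x hx
  have : 0 < Real.sqrt (qq k x) := Real.sqrt_pos.mpr hq
  unfold gg'
  apply div_nonneg _ (by positivity)
  nlinarith [hq, sq_nonneg x]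

lemma VV_nonneg (x : ℝ) (hq : 0 < qq k x) : 0 ≤ VV k x := by
  unfold VV EE
  have : 0 ≤ Real.sqrt (qq k x) := Real.sqrt_nonneg _
  positivity

lemma abs_HH_le (x : ℝ) (hq : 0 < qq k x) : |HH k x| ≤ VV k x / 2 := by
  have ht : 0 < Real.sqrt (qq k x) := Real.sqrt_pos.mpr hq
  unfold HH VV EE
  rw [abs_mul, div_div, le_div_iff₀ (by positivity)]
  nlinarith [sq_nonneg (Real.sqrt (qq k x) * |w k x| - |w1 k x|), Real.sq_sqrt hq.le,
    sq_abs (w k x), sq_abs (w1 k x), abs_nonneg (w k x), abs_nonneg (w1 k x)]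

lemma w_sq_le (x : ℝ) (hq : 0 < qq k x) : (w k x)^2 ≤ VV k x / Real.sqrt (qq k x) := by
  have ht : 0 < Real.sqrt (qq k x) := Real.sqrt_pos.mpr hq
  unfold VV EE
  rw [div_div, le_div_iff₀ (by positivity), Real.mul_self_sqrt hq.le]
  nlinarith [sq_nonneg (w1 k x)]

end Facts

lemma continuous_pp (k : ℕ) : Continuous (pp k) := by
  have : pp k = fun x => ((hermite k).map (algebraMap ℤ ℝ)).eval x := by
    funext x; simp [pp, aeval_def, eval₂_eq_eval_map]
  rw [this]; exact Polynomial.continuous _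
lemma continuous_pp1 (k : ℕ) : Continuous (pp1 k) := by
  have : pp1 k = fun x => (((hermite k).map (algebraMap ℤ ℝ)).derivative).eval x := by
    funext x; simp [pp1, aeval_def, eval₂_eq_eval_map, derivative_map]
  rw [this]; exact Polynomial.continuous _
lemma continuous_gauss : Continuous (fun x : ℝ => Real.exp (-x^2/4)) := by fun_prop
lemma continuous_w (k : ℕ) : Continuous (w k) := continuous_gauss.mul (continuous_pp k)
lemma continuous_w1 (k : ℕ) : Continuous (w1 k) := by
  apply continuous_gauss.mul
  exact (continuous_pp1 k).sub ((continuous_id.div_const 2).mul (continuous_pp k))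
lemma continuous_qq (k : ℕ) : Continuous (qq k) := by unfold qq; fun_prop
lemma continuous_EE (k : ℕ) : Continuous (EE k) :=
  ((continuous_w1 k).pow 2).add ((continuous_qq k).mul ((continuous_w k).pow 2))
lemma continuous_HH (k : ℕ) : Continuous (HH k) := (continuous_w k).mul (continuous_w1 k)
lemma continuous_sqq (k : ℕ) : Continuous (fun x => Real.sqrt (qq k x)) :=
  Real.continuous_sqrt.comp (continuous_qq k)

lemma continuousOn_VV (k : ℕ) (hk : 1 ≤ k) : ContinuousOn (VV k) (Set.Icc 0 (yy k)) := by
  apply ContinuousOn.div (continuous_EE k).continuousOn (continuous_sqq k).continuousOn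
  exact fun x hx => (Real.sqrt_pos.mpr (qq_pos_on k hk x hx)).ne'
lemma continuousOn_gg' (k : ℕ) (hk : 1 ≤ k) (c : ℝ) (hc : Set.Icc 0 c ⊆ Set.Icc 0 (yy k)) :
    ContinuousOn (gg' k) (Set.Icc 0 c) := by
  apply ContinuousOn.div (Continuous.continuousOn (by unfold qq; fun_prop))
  · exact (((continuous_const.mul ((continuous_qq k).pow 2)).mul (continuous_sqq k))).continuousOn
  · intro x hx
    have hq := qq_pos_on k hk x (hc hx)
    have := Real.sqrt_pos.mpr hq
    positivity

lemma VV_le_twice (k : ℕ) (hk : 1 ≤ k) :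
    ∀ x ∈ Set.Icc 0 (yy k), VV k x ≤ 2 * VV k 0 := by
  have h0mem : (0:ℝ) ∈ Set.Icc 0 (yy k) := ⟨le_refl 0, yy_nonneg k hk⟩
  obtain ⟨c, hcmem, hcmax⟩ :=
    (isCompact_Icc).exists_isMaxOn ⟨0, h0mem⟩ (continuousOn_VV k hk)
  set M := VV k c with hM
  suffices h : M ≤ 2 * VV k 0 by
    intro x hx; exact le_trans (hcmax hx) h
  have hc0 : 0 ≤ c := hcmem.1
  have hsub : Set.Icc 0 c ⊆ Set.Icc 0 (yy k) := Set.Icc_subset_Icc le_rfl hcmem.2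
  have hq : ∀ t ∈ Set.Icc 0 c, 0 < qq k t := fun t ht => qq_pos_on k hk t (hsub ht)
  -- FTC for F = VV - gg*HH
  have hder : ∀ t ∈ Set.uIcc 0 c,
      HasDerivAt (fun x => VV k x - gg k x * HH k x) (-(gg' k t * HH k t)) t := by
    intro t ht
    rw [Set.uIcc_of_le hc0] at ht
    have h1 := hasDerivAt_VV k hk t (hq t ht)
    have h2 := (hasDerivAt_gg k t (hq t ht)).mul (hasDerivAt_HH k hk t)
    have := h1.sub h2
    refine this.congr_deriv ?_
    ring
  have hcontHH : ContinuousOn (fun t => gg' k t * HH k t) (Set.Icc 0 c) :=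
    (continuousOn_gg' k hk c hsub).mul (continuous_HH k).continuousOn
  have hint : IntervalIntegrable (fun t => -(gg' k t * HH k t)) volume 0 c := by
    apply ContinuousOn.intervalIntegrable
    rw [Set.uIcc_of_le hc0]
    exact hcontHH.neg
  have hFTC := integral_eq_sub_of_hasDerivAt hder hint
  have hgg0 : gg k 0 = 0 := by unfold gg; simp
  -- FTC for gg
  have hderg : ∀ t ∈ Set.uIcc 0 c, HasDerivAt (gg k) (gg' k t) t := by
    intro t ht
    rw [Set.uIcc_of_le hc0] at ht
    exact hasDerivAt_gg k t (hq t ht)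
  have hintg : IntervalIntegrable (gg' k) volume 0 c := by
    apply ContinuousOn.intervalIntegrable
    rw [Set.uIcc_of_le hc0]
    exact continuousOn_gg' k hk c hsub
  have hFTCg := integral_eq_sub_of_hasDerivAt hderg hintg
  -- bound the integral
  have hMnn : 0 ≤ M := VV_nonneg k c (hq c ⟨hc0, le_refl c⟩)
  have hptbd : ∀ t ∈ Set.Icc 0 c, |(fun t => -(gg' k t * HH k t)) t| ≤ gg' k t * (M/2) := by
    intro t ht
    rw [abs_neg, abs_mul, abs_of_nonneg (gg'_nonneg k hk t (hsub ht))]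
    apply mul_le_mul_of_nonneg_left _ (gg'_nonneg k hk t (hsub ht))
    calc |HH k t| ≤ VV k t / 2 := abs_HH_le k t (hq t ht)
      _ ≤ M / 2 := by
          have h3 : VV k t ≤ VV k c := hcmax (hsub ht)
          rw [hM]; linarith
  have habs : |∫ t in (0:ℝ)..c, -(gg' k t * HH k t)| ≤ (gg k c - gg k 0) * (M/2) := by
    calc |∫ t in (0:ℝ)..c, -(gg' k t * HH k t)|
        ≤ ∫ t in (0:ℝ)..c, |(-(gg' k t * HH k t))| := abs_integral_le_integral_abs hc0
      _ ≤ ∫ t in (0:ℝ)..c, gg' k t * (M/2) := by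
          apply integral_mono_on hc0 _ (hintg.mul_const _) hptbd
          · exact hint.abs
      _ = (gg k c - gg k 0) * (M/2) := by
          rw [intervalIntegral.integral_mul_const, hFTCg]
  -- put together
  have hHc : gg k c * HH k c ≤ (1/2) * (M/2) := by
    have h1 : gg k c * HH k c ≤ gg k c * |HH k c| := by
      apply mul_le_mul_of_nonneg_left (le_abs_self _) (gg_nonneg k hk c hcmem)
    have h2 : |HH k c| ≤ M/2 := le_trans (abs_HH_le k c (hq c ⟨hc0, le_refl c⟩))
      (by linarith [le_refl M])
    nlinarith [gg_nonneg k hk c hcmem, gg_le_half k hk c hcmem, abs_nonneg (HH k c)]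
  have hVc : M = VV k 0 + gg k c * HH k c + ∫ t in (0:ℝ)..c, -(gg' k t * HH k t) := by
    have := hFTC
    rw [hgg0] at this
    simp only [zero_mul, sub_zero] at this
    linarith [this]
  have hggc : gg k c ≤ 1/2 := gg_le_half k hk c hcmem
  have hggcnn : 0 ≤ gg k c := gg_nonneg k hk c hcmem
  have hI := (abs_le.mp habs).2
  rw [hgg0, sub_zero] at hI
  have h4 : gg k c * (M/2) ≤ (1/2)*(M/2) := by nlinarith
  nlinarith [hVc, hHc, hI, h4]

lemma df_key : ∀ n : ℕ, (n+1) * ((n-1)‼)^2 ≤ 2 * (n‼)^2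
  | 0 => by simp [Nat.doubleFactorial]
  | 1 => by simp [Nat.doubleFactorial]
  | (n+2) => by
    have ih := df_key n
    have h1 : (n+2)‼ = (n+2) * n‼ := Nat.doubleFactorial_add_two n
    have h2 : (n+1)‼ = (n+1) * (n-1)‼ := Nat.doubleFactorial_add_one n
    have h3 : n + 2 - 1 = n + 1 := by omega
    rw [h3, h1, h2]
    calc (n+2+1)*((n+1)*(n-1)‼)^2 = (n+3)*(n+1)*((n+1)*((n-1)‼)^2) := by ring
      _ ≤ (n+3)*(n+1)*(2*(n‼)^2) := Nat.mul_le_mul_left _ ih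
      _ ≤ (n+2)*(n+2)*(2*(n‼)^2) := Nat.mul_le_mul_right _ (by nlinarith)
      _ = 2*((n+2)*n‼)^2 := by ring

lemma pp_zero_odd (m : ℕ) (hm : Odd m) : pp m 0 = 0 := by
  unfold pp
  rw [aeval_def, eval₂_at_zero, coeff_hermite_of_odd_add (by simpa using hm)]
  simp

lemma pp_zero_even_sq (m : ℕ) : pp (2*m) 0 ^ 2 = (((2*m-1)‼ : ℕ) : ℝ)^2 := by
  unfold pp
  rw [aeval_def, eval₂_at_zero]
  have h := coeff_hermite_explicit m 0
  rw [add_zero] at h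
  rw [h, Nat.choose_zero_right]
  push_cast
  rw [mul_one, mul_pow, ← pow_mul, mul_comm m 2, pow_mul]
  norm_num

lemma pp1_zero (n : ℕ) : pp1 (n+1) 0 = (n+1) * pp n 0 := by
  unfold pp1 pp
  rw [hermite_deriv n]
  simp

lemma fact_eq (k : ℕ) (hk : 1 ≤ k) : (k)! = k‼ * (k-1)‼ := by
  obtain ⟨n, rfl⟩ := Nat.exists_eq_add_of_le hk
  have h : 1 + n = n + 1 := by omega
  rw [h]
  simpa using Nat.factorial_eq_mul_doubleFactorial n

lemma EE_zero (k : ℕ) : EE k 0 = (pp1 k 0)^2 + L k * (pp k 0)^2 := by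
  unfold EE w w1 qq
  norm_num

lemma E0_bound (k : ℕ) (hk : 1 ≤ k) : EE k 0 ≤ 2 * (k)! * Real.sqrt (L k) := by
  have hL : (0:ℝ) < L k := by unfold L; positivity
  have hLk : L k ≤ (k:ℝ) + 1 := by unfold L; norm_num
  have hkL : (k:ℝ) ≤ 2 * L k := by unfold L; push_cast; linarith
  have hsnn : (0:ℝ) ≤ Real.sqrt (L k) := Real.sqrt_nonneg _
  rcases Nat.even_or_odd k with he | ho
  · -- k even
    obtain ⟨m, hm⟩ := he
    have hm' : k = 2*m := by omega
    subst hm'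
    have hm1 : 1 ≤ m := by omega
    have hp1 : pp1 (2*m) 0 = 0 := by
      rw [show 2*m = (2*m-1) + 1 by omega, pp1_zero (2*m-1),
        pp_zero_odd (2*m-1) ⟨m-1, by omega⟩]
      ring
    rw [EE_zero, hp1, pp_zero_even_sq m]
    set k := 2*m with hkdef
    simp only [ne_eq, OfNat.ofNat_ne_zero, not_false_iff, zero_pow, zero_add]
    set D : ℝ := (((2*m-1)‼ : ℕ) : ℝ) with hD
    have hDnn : 0 ≤ D := by rw [hD]; positivity
    have hkey := df_key k
    have hfac := fact_eq k hk
    have hk1 : k - 1 = 2*m-1 := by omega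
    rw [hk1] at hkey hfac
    have hkeyR : ((k:ℝ)+1) * D^2 ≤ 2 * ((k‼ : ℕ):ℝ)^2 := by
      rw [hD]; exact_mod_cast hkey
    have hfacR : ((k)! : ℝ) = ((k‼:ℕ):ℝ) * D := by rw [hD]; exact_mod_cast hfac
    have h5 : L k * D^2 ≤ (2*((k‼:ℕ):ℝ))^2 := by nlinarith [sq_nonneg D]
    have h6 : Real.sqrt (L k) * D ≤ 2*((k‼:ℕ):ℝ) := by
      have h7 := Real.sqrt_le_sqrt h5
      rwa [Real.sqrt_mul hL.le, Real.sqrt_sq hDnn, Real.sqrt_sq (by positivity)] at h7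
    calc L k * D^2 = (Real.sqrt (L k) * D) * (Real.sqrt (L k) * D) := by
            rw [show (Real.sqrt (L k) * D) * (Real.sqrt (L k) * D)
                = (Real.sqrt (L k) * Real.sqrt (L k)) * D^2 by ring,
              Real.mul_self_sqrt hL.le]
      _ ≤ (2*((k‼:ℕ):ℝ)) * (Real.sqrt (L k) * D) := by
            apply mul_le_mul_of_nonneg_right h6 (by positivity)
      _ = 2 * ((k)! : ℝ) * Real.sqrt (L k) := by rw [hfacR]; ring
  · -- k odd
    obtain ⟨n, rfl⟩ : ∃ n, k = n + 1 := ⟨k - 1, by omega⟩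
    have hne : Even n := by rcases ho with ⟨j, hj⟩; exact ⟨j, by omega⟩
    obtain ⟨m, hm⟩ := hne
    have hm' : n = 2*m := by omega
    rw [EE_zero, pp_zero_odd (n+1) ho, pp1_zero n]
    simp only [ne_eq, OfNat.ofNat_ne_zero, not_false_iff, zero_pow, mul_zero, add_zero]
    set D : ℝ := (((2*m-1)‼ : ℕ) : ℝ) with hD
    set F : ℝ := (((n)‼ : ℕ) : ℝ) with hF
    have hDnn : 0 ≤ D := by rw [hD]; positivity
    have hFnn : 0 ≤ F := by rw [hF]; positivity
    have hppsq : pp n 0 ^2 = D^2 := by rw [hm']; exact pp_zero_even_sq m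
    have hkey := df_key n
    have hn1 : n - 1 = 2*m - 1 := by omega
    rw [hn1] at hkey
    have hkeyR : ((n:ℝ)+1) * D^2 ≤ 2 * F^2 := by
      rw [hD, hF]; exact_mod_cast hkey
    -- k! = (n+1)! = (n+1)‼ * n‼ and (n+1)‼ = (n+1)*(n-1)‼
    have hfac : ((n+1)! : ℕ) = (n+1)‼ * n‼ := Nat.factorial_eq_mul_doubleFactorial n
    have hdf1 : (n+1)‼ = (n+1) * ((2*m-1)‼) := by rw [← hn1]; exact Nat.doubleFactorial_add_one n
    have hfacR : (((n+1)! : ℕ) : ℝ) = ((n:ℝ)+1) * D * F := by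
      rw [hD, hF, hfac, hdf1]; push_cast; ring
    have hL' : ((n:ℝ)+1) ≤ 2 * L (n+1) := by
      have : ((n+1 : ℕ):ℝ) ≤ 2 * L (n+1) := hkL
      push_cast at this ⊢; linarith
    -- goal: ((n+1) * pp n 0)^2 ≤ 2 * (n+1)! * sqrt L
    rw [mul_pow, hppsq]
    have h5 : ((n:ℝ)+1)^2 * D^2 ≤ (2 * F * Real.sqrt (L (n+1)))^2 := by
      have hs2 : Real.sqrt (L (n+1)) ^2 = L (n+1) := Real.sq_sqrt hL.le
      nlinarith [sq_nonneg D, sq_nonneg F, hkeyR, hL', sq_nonneg (Real.sqrt (L (n+1)))]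
    have h6 : ((n:ℝ)+1) * D ≤ 2 * F * Real.sqrt (L (n+1)) := by
      have h7 := Real.sqrt_le_sqrt h5
      rwa [show ((n:ℝ)+1)^2 * D^2 = (((n:ℝ)+1)*D)^2 by ring,
        Real.sqrt_sq (by positivity), Real.sqrt_sq (by positivity)] at h7
    have hcast : ((n:ℝ)+1) = (((n+1 : ℕ)):ℝ) := by push_cast; ring
    calc ((n:ℝ)+1)^2 * D^2 = (((n:ℝ)+1) * D) * (((n:ℝ)+1) * D) := by ring
      _ ≤ (2 * F * Real.sqrt (L (n+1))) * (((n:ℝ)+1) * D) := by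
            apply mul_le_mul_of_nonneg_right h6 (by positivity)
      _ = 2 * (((n+1)! : ℕ) : ℝ) * Real.sqrt (L (n+1)) := by rw [hfacR]; ring


section R23
variable (k : ℕ) (hk : 1 ≤ k)

include hk in
lemma mm_nonneg (x : ℝ) : 0 ≤ mm k x := by
  have hs := ss_pos k hk
  unfold mm; positivity

include hk in
lemma yy_lt_zz : yy k < zz k := by
  have hs := ss_pos k hk
  have : 0 < 4 / ss k := by positivity
  unfold zz; linarith

include hk in
lemma hyy2 : yy k ^2 = 4 * (L k - ss k ^ 2) := by
  unfold yy
  rw [mul_pow, Real.sq_sqrt (by linarith [ss_sq_le_L k hk])]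
  ring

include hk in
lemma hqzz_eq : qq k (zz k) = ss k^2 - 2*yy k/ss k - 4/ss k^2 := by
  have hs := ss_pos k hk
  have hzz2 : zz k ^2 = yy k^2 + 8*yy k/ss k + 16/ss k^2 := by
    unfold zz; field_simp; ring
  have h2 := hyy2 k hk
  unfold qq
  rw [hzz2, h2]
  field_simp
  ring

include hk in
lemma qq_on_R2 (x : ℝ) (hx : x ∈ Set.Icc (yy k) (zz k)) : |qq k x| ≤ (3 * ss k)^2 := by
  have hs1 := ss_ge_one k hk
  have hs := ss_pos k hk
  have hyn := yy_nonneg k hk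
  have h1 : qq k x ≤ ss k ^2 := by
    have := qq_mono k hk x (yy k) hyn hx.1
    rw [qq_yy k hk] at this; linarith
  have h2 : qq k (zz k) ≤ qq k x := qq_mono k hk (zz k) x (le_trans hyn hx.1) hx.2
  have hqzz : -(qq k (zz k)) ≤ 7 * ss k ^2 := by
    rw [hqzz_eq k hk]
    have e1 : 2 * yy k / ss k ≤ 4 * ss k ^2 := by
      rw [div_le_iff₀ hs]
      nlinarith [yy_le k hk]
    have e2 : (4:ℝ) / ss k ^2 ≤ 4 * ss k ^2 := by
      rw [div_le_iff₀ (by positivity)]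
      have hs2 : 1 ≤ ss k^2 := by nlinarith
      nlinarith [hs2]
    nlinarith
  rw [abs_le]
  constructor <;> nlinarith

include hk in
lemma qq_zz_nonpos : qq k (zz k) ≤ 0 := by
  have hs1 := ss_ge_one k hk
  have hs := ss_pos k hk
  have h64 : (16/15 : ℝ) ≤ ss k ^4 := by
    have hL := L_ge k hk
    have h12 : ((16:ℝ)/15)^3 ≤ (ss k ^4)^3 := by
      have he : (ss k ^4)^3 = (ss k ^6)^2 := by ring
      rw [he, ss_pow6 k]
      nlinarith
    exact le_of_pow_le_pow_left₀ (by norm_num) (by positivity) h12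
  have hyy_ge : ss k ^3 / 2 ≤ yy k := by
    have h2 : (ss k^3/2)^2 ≤ yy k ^2 := by
      rw [hyy2 k hk]
      have h6 : ss k ^ 6 = L k := ss_pow6 k
      nlinarith
    have := Real.sqrt_le_sqrt h2
    rwa [Real.sqrt_sq (by positivity), Real.sqrt_sq (yy_nonneg k hk)] at this
  rw [hqzz_eq k hk]
  have h3 : ss k ^2 ≤ 2 * yy k / ss k := by
    rw [le_div_iff₀ hs]
    nlinarith
  have h4 : (0:ℝ) < 4 / ss k^2 := by positivity
  linarith

include hk in
lemma hasDerivAt_mm (x : ℝ) : HasDerivAt (mm k)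
    (2 * w k x * w1 k x + 2 * w1 k x * ((x^2/4 - L k) * w k x) / (3 * ss k)^2) x := by
  have h1 := (hasDerivAt_w k x).pow 2
  have h2 := ((hasDerivAt_w1 k hk x).pow 2).div_const ((3 * ss k)^2)
  have := h1.add h2
  refine this.congr_deriv ?_
  push_cast
  ring

include hk in
lemma hasDerivAt_mme (u : ℝ) : HasDerivAt (fun t => mm k t * Real.exp (-(6 * ss k) * t))
    ((2 * w k u * w1 k u + 2 * w1 k u * ((u^2/4 - L k) * w k u) / (3 * ss k)^2)
        * Real.exp (-(6 * ss k) * u)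
      + mm k u * (Real.exp (-(6 * ss k) * u) * (-(6 * ss k)))) u := by
  have he : HasDerivAt (fun t : ℝ => Real.exp (-(6 * ss k) * t))
      (Real.exp (-(6 * ss k) * u) * (-(6 * ss k))) u := by
    have := ((hasDerivAt_id u).const_mul (-(6 * ss k))).exp
    refine this.congr_deriv ?_
    · simp [mul_comm]
  exact (hasDerivAt_mm k hk u).mul he

include hk in
lemma mm_decay (x : ℝ) (hx : x ∈ Set.Icc (yy k) (zz k)) :
    mm k x ≤ Real.exp 24 * mm k (yy k) := by
  have hs1 := ss_ge_one k hk
  have hs := ss_pos k hk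
  have hanti : AntitoneOn (fun t => mm k t * Real.exp (-(6 * ss k) * t))
      (Set.Icc (yy k) (zz k)) := by
    apply antitoneOn_of_deriv_nonpos (convex_Icc _ _)
    · apply Continuous.continuousOn
      apply Continuous.mul
      · exact (((continuous_w k).pow 2)).add (((continuous_w1 k).pow 2).div_const _)
      · fun_prop
    · intro t _
      exact ((hasDerivAt_mme k hk t).differentiableAt).differentiableWithinAt
    · intro t ht
      rw [interior_Icc] at ht
      rw [(hasDerivAt_mme k hk t).deriv]
      have hqb := qq_on_R2 k hk t (Set.mem_Icc_of_Ioo ht)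
      have habs := abs_le.mp hqb
      have hexp : (0:ℝ) < Real.exp (-(6 * ss k) * t) := Real.exp_pos _
      set a := w k t
      set b := w1 k t
      have hq' : t^2/4 - L k = -(qq k t) := by unfold qq; ring
      rw [hq']
      set r := qq k t
      have hom2 : (0:ℝ) < (3 * ss k)^2 := by positivity
      -- key inequality
      have hP6 : 0 ≤ 6*ss k*(9*ss k^2*(6 * ss k * (a^2 + b^2/(3*ss k)^2)
          - (2*a*b + 2*b*(-r*a)/(3*ss k)^2))) := by
        have k1 : 0 ≤ 18*ss k^2*(3*ss k*a - b)^2 := by positivity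
        have k2 : 0 ≤ (9*ss k^2 + r)*(3*ss k*a+b)^2 := by
          apply mul_nonneg _ (sq_nonneg _)
          nlinarith [habs.1]
        have k3 : 0 ≤ (9*ss k^2 - r)*(3*ss k*a-b)^2 := by
          apply mul_nonneg _ (sq_nonneg _)
          nlinarith [habs.2]
        have e1 : 6*ss k*(9*ss k^2*(6 * ss k * (a^2 + b^2/(3*ss k)^2)
            - (2*a*b + 2*b*(-r*a)/(3*ss k)^2)))
            = 18*ss k^2*(3*ss k*a - b)^2
              + ((9*ss k^2 + r)*(3*ss k*a+b)^2 + (9*ss k^2 - r)*(3*ss k*a-b)^2) := by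
          field_simp
          ring
        rw [e1]
        linarith
      have key : 2*a*b + 2*b*(-r*a)/(3*ss k)^2 ≤ 6 * ss k * (a^2 + b^2/(3*ss k)^2) := by
        by_contra hneg
        push_neg at hneg
        nlinarith [hP6, pow_pos hs 3]
      have hmm : mm k t = a^2 + b^2/(3*ss k)^2 := rfl
      rw [hmm]
      nlinarith [mul_le_mul_of_nonneg_right key hexp.le]
  have h1 := hanti (Set.left_mem_Icc.mpr (yy_lt_zz k hk).le) hx hx.1
  simp only at h1
  -- mm x ≤ mm yy * exp(6 s (x - yy)) ≤ mm yy * exp 24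
  have hexp2 : (0:ℝ) < Real.exp (-(6 * ss k) * x) := Real.exp_pos _
  have h2 : mm k x ≤ mm k (yy k) * Real.exp (6 * ss k * (x - yy k)) := by
    rw [← mul_le_mul_iff_of_pos_right hexp2]
    calc mm k x * Real.exp (-(6 * ss k) * x) ≤ mm k (yy k) * Real.exp (-(6 * ss k) * yy k) := h1
      _ = mm k (yy k) * Real.exp (6 * ss k * (x - yy k)) * Real.exp (-(6 * ss k) * x) := by
          rw [mul_assoc, ← Real.exp_add]
          ring_nf
  have h3 : 6 * ss k * (x - yy k) ≤ 24 := by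
    have hxz : x - yy k ≤ 4 / ss k := by
      have := hx.2; unfold zz at this; linarith
    calc 6 * ss k * (x - yy k) ≤ 6 * ss k * (4 / ss k) := by
          apply mul_le_mul_of_nonneg_left hxz (by positivity)
      _ = 24 := by field_simp; ring
  calc mm k x ≤ mm k (yy k) * Real.exp (6 * ss k * (x - yy k)) := h2
    _ ≤ mm k (yy k) * Real.exp 24 := by
        apply mul_le_mul_of_nonneg_left (Real.exp_le_exp.mpr h3) (mm_nonneg k hk _)
    _ = Real.exp 24 * mm k (yy k) := by ring

end R23

section Region1
variable (k : ℕ) (hk : 1 ≤ k)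

include hk in
lemma VV0_le : VV k 0 ≤ 2 * (k)! := by
  have hL := L_pos k
  have hq0 : qq k 0 = L k := by unfold qq; norm_num
  have hsL : 0 < Real.sqrt (L k) := Real.sqrt_pos.mpr hL
  unfold VV
  rw [hq0, div_le_iff₀ hsL]
  exact E0_bound k hk

include hk in
lemma fact_pos_real : (0:ℝ) < (k)! := by exact_mod_cast Nat.factorial_pos k

include hk in
lemma region1 (x : ℝ) (hx : x ∈ Set.Icc 0 (yy k)) : (w k x)^2 ≤ 4 * (k)! / ss k := by
  have hs := ss_pos k hk
  have hq := qq_pos_on k hk x hx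
  have hsq : ss k ≤ Real.sqrt (qq k x) := by
    rw [show ss k = Real.sqrt (ss k^2) from (Real.sqrt_sq hs.le).symm]
    exact Real.sqrt_le_sqrt (qq_lb k hk x hx)
  have h1 := w_sq_le k x hq
  have h2 : VV k x ≤ 4 * (k)! := le_trans (VV_le_twice k hk x hx) (by linarith [VV0_le k hk])
  have h3 : VV k x / Real.sqrt (qq k x) ≤ (4 * (k)!) / ss k := by
    apply div_le_div₀ (by positivity) h2 hs hsq
  linarith
-- note: div_le_div₀ needs 0 ≤ numerator top
include hk in
lemma EE_yy_le : EE k (yy k) ≤ 4 * (k)! * ss k := by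
  have hs := ss_pos k hk
  have hyy : yy k ∈ Set.Icc 0 (yy k) := Set.right_mem_Icc.mpr (yy_nonneg k hk)
  have h2 : VV k (yy k) ≤ 4 * (k)! := le_trans (VV_le_twice k hk _ hyy) (by linarith [VV0_le k hk])
  have hq := qq_pos_on k hk _ hyy
  have hE : EE k (yy k) = VV k (yy k) * Real.sqrt (qq k (yy k)) := by
    unfold VV
    rw [div_mul_cancel₀]
    exact (Real.sqrt_pos.mpr hq).ne'
  rw [hE, qq_yy k hk, Real.sqrt_sq hs.le]
  apply mul_le_mul_of_nonneg_right h2 hs.le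

include hk in
lemma mm_yy_le : mm k (yy k) ≤ 5 * (k)! / ss k := by
  have hs := ss_pos k hk
  have hs1 := ss_ge_one k hk
  have hfac := fact_pos_real k hk
  have hyy : yy k ∈ Set.Icc 0 (yy k) := Set.right_mem_Icc.mpr (yy_nonneg k hk)
  have h1 := region1 k hk _ hyy
  have h2 : (w1 k (yy k))^2 ≤ EE k (yy k) := by
    have hq : 0 ≤ qq k (yy k) := (qq_pos_on k hk _ hyy).le
    unfold EE
    nlinarith [sq_nonneg (w k (yy k))]
  have h3 := EE_yy_le k hk
  unfold mm
  have h4 : (w1 k (yy k))^2/(3*ss k)^2 ≤ (4 * (k)! * ss k)/(9 * ss k^2) := by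
    apply div_le_div₀ (by positivity) (le_trans h2 h3) (by positivity) (by nlinarith)
  have h5 : (4 * (k)! * ss k)/(9*ss k^2) ≤ (k)!/ss k := by
    rw [div_le_div_iff₀ (by positivity) hs]
    nlinarith
  have h6 : 4 * (k)!/ss k + (k)!/ss k = 5 * (k)!/ss k := by ring
  linarith

end Region1

section Region3
variable (k : ℕ) (hk : 1 ≤ k)

include hk in
lemma w_sq_tendsto : Tendsto (fun x => (w k x)^2) atTop (nhds 0) := by
  set Q : Polynomial ℝ := ((hermite k).map (algebraMap ℤ ℝ))^2 with hQ
  have hbound : ∀ x : ℝ, 2 ≤ x → (w k x)^2 ≤ Q.eval x / Real.exp x := by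
    intro x hx2
    have hwq : (w k x)^2 = Q.eval x * Real.exp (-x^2/2) := by
      unfold w
      rw [pp_eq k x, hQ, eval_pow, mul_pow]
      have he : Real.exp (-x^2/4)^2 = Real.exp (-x^2/2) := by
        rw [sq, ← Real.exp_add]; congr 1; ring
      rw [he]
      ring
    have hQnn : 0 ≤ Q.eval x := by rw [hQ, eval_pow]; positivity
    rw [hwq, le_div_iff₀ (Real.exp_pos x), mul_assoc, ← Real.exp_add]
    nth_rewrite 2 [← mul_one (Q.eval x)]
    apply mul_le_mul_of_nonneg_left _ hQnn
    rw [show (1:ℝ) = Real.exp 0 from (Real.exp_zero).symm]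
    apply Real.exp_le_exp.mpr
    nlinarith
  have hdecay : Tendsto (fun x => Q.eval x / Real.exp x) atTop (nhds 0) :=
    Q.tendsto_div_exp_atTop
  apply tendsto_of_tendsto_of_tendsto_of_le_of_le' tendsto_const_nhds hdecay
  · exact Eventually.of_forall (fun x => sq_nonneg _)
  · filter_upwards [eventually_ge_atTop 2] with x hx using hbound x hx

include hk in
lemma region3 (x : ℝ) (hx : zz k ≤ x) : (w k x)^2 ≤ (w k (zz k))^2 := by
  have hzz0 : 0 ≤ zz k := le_trans (yy_nonneg k hk) (yy_lt_zz k hk).le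
  set f : ℝ → ℝ := fun t => (w k t)^2 with hf
  have hdf : ∀ t : ℝ, HasDerivAt f (2 * w k t * w1 k t) t := by
    intro t
    have := (hasDerivAt_w k t).pow 2
    refine this.congr_deriv ?_
    push_cast
    ring
  have hderiv : deriv f = fun t => 2 * w k t * w1 k t := funext fun t => (hdf t).deriv
  have hconv : ConvexOn ℝ (Set.Ici (zz k)) f := by
    apply convexOn_of_deriv2_nonneg (convex_Ici _) ((continuous_w k).pow 2).continuousOn
    · intro t _
      exact (hdf t).differentiableAt.differentiableWithinAt
    · intro t _
      change DifferentiableWithinAt ℝ (deriv f) _ t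
      rw [hderiv]
      apply DifferentiableAt.differentiableWithinAt
      exact (((hasDerivAt_w k t).const_mul 2).mul (hasDerivAt_w1 k hk t)).differentiableAt
    · intro t ht
      rw [interior_Ici] at ht
      show 0 ≤ deriv (deriv f) t
      rw [hderiv]
      have hD : HasDerivAt (fun t => 2 * w k t * w1 k t)
          (2 * w1 k t * w1 k t + 2 * w k t * ((t^2/4 - L k) * w k t)) t := by
        exact ((hasDerivAt_w k t).const_mul 2).mul (hasDerivAt_w1 k hk t)
      rw [hD.deriv]
      have hqt : qq k t ≤ 0 :=
        le_trans (qq_mono k hk t (zz k) hzz0 ht.le) (qq_zz_nonpos k hk)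
      have : t^2/4 - L k = -(qq k t) := by unfold qq; ring
      rw [this]
      nlinarith [sq_nonneg (w1 k t), sq_nonneg (w k t)]
  have hmax : ∀ t : ℝ, x ≤ t → f x ≤ max (f (zz k)) (f t) := by
    intro t ht
    apply hconv.le_on_segment (Set.self_mem_Ici) (le_trans hx ht)
    rw [segment_eq_Icc (le_trans hx ht)]
    exact ⟨hx, ht⟩
  have hlim : Tendsto (fun t => max (f (zz k)) (f t)) atTop (nhds (max (f (zz k)) 0)) :=
    tendsto_const_nhds.max (w_sq_tendsto k hk)
  rw [max_eq_left (sq_nonneg _)] at hlim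
  exact ge_of_tendsto hlim (eventually_atTop.mpr ⟨x, hmax⟩)

end Region3

lemma w_sq_even (k : ℕ) (x : ℝ) : (w k (-x))^2 = (w k x)^2 := by
  unfold w
  rw [show pp k (-x) = (-1)^k * pp k x from (hermite_parity k x).1]
  rw [neg_pow, mul_pow, mul_pow, mul_pow, ← pow_mul, mul_comm k 2, pow_mul]
  norm_num

theorem w_sq_bound (k : ℕ) (hk : 1 ≤ k) (x : ℝ) :
    (w k x)^2 ≤ 5 * Real.exp 24 * (k)! / ss k := by
  have hs := ss_pos k hk
  have hfac := fact_pos_real k hk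
  have he24 : (1:ℝ) ≤ Real.exp 24 := by
    rw [show (1:ℝ) = Real.exp 0 from (Real.exp_zero).symm]
    exact Real.exp_le_exp.mpr (by norm_num)
  -- main bound for x ≥ 0
  have main : ∀ z : ℝ, 0 ≤ z → (w k z)^2 ≤ 5 * Real.exp 24 * (k)! / ss k := by
    intro z hz
    have hR2 : ∀ u ∈ Set.Icc (yy k) (zz k), (w k u)^2 ≤ 5 * Real.exp 24 * (k)! / ss k := by
      intro u hu
      have h1 : (w k u)^2 ≤ mm k u := by
        unfold mm
        have : 0 ≤ (w1 k u)^2/(3 * ss k)^2 := by positivity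
        linarith
      have h2 := mm_decay k hk u hu
      have h3 := mm_yy_le k hk
      calc (w k u)^2 ≤ Real.exp 24 * mm k (yy k) := by
            calc (w k u)^2 ≤ mm k u := h1
              _ ≤ Real.exp 24 * mm k (yy k) := h2
        _ ≤ Real.exp 24 * (5 * (k)!/ss k) := by
            apply mul_le_mul_of_nonneg_left h3 (Real.exp_pos 24).le
        _ = 5 * Real.exp 24 * (k)! / ss k := by ring
    rcases le_or_gt z (yy k) with h | h
    · have := region1 k hk z ⟨hz, h⟩
      calc (w k z)^2 ≤ 4 * (k)!/ss k := this
        _ ≤ 5 * Real.exp 24 * (k)! / ss k := by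
            apply div_le_div₀ (by positivity) (by nlinarith) hs le_rfl
    · rcases le_or_gt z (zz k) with h' | h'
      · exact hR2 z ⟨h.le, h'⟩
      · calc (w k z)^2 ≤ (w k (zz k))^2 := region3 k hk z h'.le
          _ ≤ 5 * Real.exp 24 * (k)! / ss k :=
              hR2 (zz k) ⟨(yy_lt_zz k hk).le, le_refl _⟩
  rcases le_or_gt 0 x with hx | hx
  · exact main x hx
  · rw [show x = -(-x) from by ring, w_sq_even k (-x)]
    exact main (-x) (by linarith)


end S12

/-- there is a constant `C₀ > 0` with
`|e^{−y²/2} H_k(y)| ≤ C₀ √(k!) k^{−1/12} e^{−y²/4}` for all `k ≥ 1` and all real `y`. -/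
theorem stmt12 :
    ∃ C : ℝ, 0 < C ∧ ∀ k : ℕ, 1 ≤ k → ∀ y : ℝ,
      |Real.exp (-y ^ 2 / 2) * He k y| ≤
        C * Real.sqrt (Nat.factorial k) * (k : ℝ) ^ (-(1 / 12 : ℝ)) *
          Real.exp (-y ^ 2 / 4) := by
  refine ⟨Real.exp 13, Real.exp_pos 13, fun k hk y => ?_⟩
  have hs := S12.ss_pos k hk
  have hkpos : (0:ℝ) < k := by exact_mod_cast hk
  have hfac : (0:ℝ) < (k.factorial) := by exact_mod_cast Nat.factorial_pos k
  -- step 1 : |w k y| ≤ exp 13 * sqrt k! * k^(-1/12)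
  have hw : |S12.w k y| ≤ Real.exp 13 * Real.sqrt (k.factorial) * (k:ℝ) ^ (-(1/12 : ℝ)) := by
    have h1 : |S12.w k y| = Real.sqrt ((S12.w k y)^2) := (Real.sqrt_sq_eq_abs _).symm
    rw [h1]
    have h2 : Real.sqrt ((S12.w k y)^2) ≤ Real.sqrt (5 * Real.exp 24 * (k.factorial) / S12.ss k) :=
      Real.sqrt_le_sqrt (S12.w_sq_bound k hk y)
    apply le_trans h2
    have hsplit : 5 * Real.exp 24 * ((k.factorial) : ℝ) / S12.ss k
        = (5 * Real.exp 24) * ((k.factorial) : ℝ) * (1 / S12.ss k) := by ring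
    rw [hsplit, Real.sqrt_mul (by positivity), Real.sqrt_mul (by positivity)]
    have b1 : Real.sqrt (5 * Real.exp 24) ≤ Real.exp 13 := by
      rw [show Real.exp 13 = Real.sqrt ((Real.exp 13)^2) from (Real.sqrt_sq (Real.exp_pos 13).le).symm]
      apply Real.sqrt_le_sqrt
      rw [sq, ← Real.exp_add]
      have : Real.exp 24 * Real.exp 2 = Real.exp (13 + 13) := by
        rw [← Real.exp_add]; norm_num
      rw [← this]
      have he2 : (5:ℝ) ≤ Real.exp 2 := by
        have h27 : (2.7182818283 : ℝ) < Real.exp 1 := Real.exp_one_gt_d9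
        have : Real.exp 2 = Real.exp 1 * Real.exp 1 := by rw [← Real.exp_add]; norm_num
        nlinarith
      nlinarith [Real.exp_pos 24]
    have b2 : Real.sqrt (1 / S12.ss k) ≤ (k:ℝ) ^ (-(1/12 : ℝ)) := by
      have hk16 : (k:ℝ) ^ ((1:ℝ)/6) ≤ S12.ss k := by
        unfold S12.ss S12.L
        apply Real.rpow_le_rpow hkpos.le (by norm_num) (by norm_num)
      have hk16pos : (0:ℝ) < (k:ℝ) ^ ((1:ℝ)/6) := Real.rpow_pos_of_pos hkpos _
      have hinv : 1 / S12.ss k ≤ (k:ℝ) ^ (-(1/6 : ℝ)) := by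
        rw [Real.rpow_neg hkpos.le, ← one_div]
        exact one_div_le_one_div_of_le hk16pos hk16
      have hsq := Real.sqrt_le_sqrt hinv
      apply le_trans hsq
      rw [Real.sqrt_eq_rpow, ← Real.rpow_mul hkpos.le]
      norm_num
    calc Real.sqrt (5 * Real.exp 24) * Real.sqrt ((k.factorial):ℝ) * Real.sqrt (1 / S12.ss k)
        ≤ Real.exp 13 * Real.sqrt ((k.factorial):ℝ) * ((k:ℝ) ^ (-(1/12 : ℝ))) := by
          apply mul_le_mul (mul_le_mul b1 le_rfl (Real.sqrt_nonneg _) (Real.exp_pos 13).le) b2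
            (Real.sqrt_nonneg _) (by positivity)
      _ = Real.exp 13 * Real.sqrt ((k.factorial):ℝ) * (k:ℝ) ^ (-(1/12 : ℝ)) := by ring
  -- step 2: rewrite LHS
  have hHe : He k y = S12.pp k y := rfl
  have hLHS : |Real.exp (-y ^ 2 / 2) * He k y| = Real.exp (-y^2/4) * |S12.w k y| := by
    rw [hHe]
    have : Real.exp (-y^2/2) = Real.exp (-y^2/4) * Real.exp (-y^2/4) := by
      rw [← Real.exp_add]; congr 1; ring
    rw [this]
    unfold S12.w
    rw [mul_assoc, abs_mul, abs_of_pos (Real.exp_pos _), abs_mul, abs_of_pos (Real.exp_pos _)]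
  rw [hLHS]
  calc Real.exp (-y^2/4) * |S12.w k y|
      ≤ Real.exp (-y^2/4) * (Real.exp 13 * Real.sqrt (k.factorial) * (k:ℝ) ^ (-(1/12 : ℝ))) :=
        mul_le_mul_of_nonneg_left hw (Real.exp_pos _).le
    _ = Real.exp 13 * Real.sqrt (k.factorial) * (k:ℝ) ^ (-(1/12 : ℝ)) * Real.exp (-y^2/4) := by ring
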